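/- Let M be a metrizable topological space and X ⊆ M. If X is an F_σ subset of M, then the space M(X) is metrizable, where M(X) is the set M equipped with the coarsest topology refining the topology of M in which every point of X is isolated (i.e., the topology generated by the open sets of M together with the singletons {x} for x ∈ X). -/

import Mathlib

open Topology

/-- A set is `F_σ` if it is a countable union of closed sets. -/
def IsFsigma {Z : Type*} [TopologicalSpace Z] (S : Set Z) : Prop :=
  ∃ C : ℕ → Set Z, (∀ n, IsClosed (C n)) ∧ S = ⋃ n, C n

/-- The Michael-line-like topology `M(X)`: the topology generated by the open
sets of `M` together with the singletons `{x}` for `x ∈ X`. -/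
def michael {M : Type*} (t : TopologicalSpace M) (X : Set M) : TopologicalSpace M :=
  TopologicalSpace.generateFrom ({U | IsOpen[t] U} ∪ {S | ∃ x ∈ X, S = {x}})

/-- Auxiliary: build a `MetrizableSpace` instance from a compatible distance. -/
theorem buildMetrizableAux {M : Type*} (τ : TopologicalSpace M) (e : M → M → ℝ)
    (e_self : ∀ x, e x x = 0) (e_comm : ∀ x y, e x y = e y x)
    (e_triangle : ∀ x y z, e x z ≤ e x y + e y z)
    (H : ∀ s : Set M, IsOpen[τ] s ↔ ∀ x ∈ s, ∃ ε > (0:ℝ), ∀ y, e x y < ε → y ∈ s)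
    (e_eq : ∀ x y, e x y = 0 → x = y) :
    @TopologicalSpace.MetrizableSpace M τ := by
  letI := τ
  letI m := MetricSpace.ofDistTopology e e_self e_comm e_triangle H e_eq
  exact (inferInstance : @TopologicalSpace.MetrizableSpace M m.toUniformSpace.toTopologicalSpace)

/-- If `M` is metrizable and `X ⊆ M` is `F_σ` in `M`, then `M(X)` is metrizable. -/
theorem stmt4 {M : Type*} [t : TopologicalSpace M] [TopologicalSpace.MetrizableSpace M]
    (X : Set M) (hX : IsFsigma X) :
    @TopologicalSpace.MetrizableSpace M (michael t X) := by
  classical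
  letI m₀ : MetricSpace M := TopologicalSpace.metrizableSpaceMetric M
  obtain ⟨C, hCc, hCX⟩ := hX
  -- the "isolation radius" function
  set r : M → ℝ := fun y => if h : ∃ n, y ∈ C n then (2⁻¹ : ℝ) ^ (Nat.find h) else 0 with hr
  have r_nonneg : ∀ y, 0 ≤ r y := by
    intro y; rw [hr]; dsimp only; split
    · positivity
    · exact le_refl 0
  have r_pos : ∀ y ∈ X, 0 < r y := by
    intro y hy
    have h : ∃ n, y ∈ C n := by
      rw [hCX] at hy; exact Set.mem_iUnion.mp hy
    rw [hr]; dsimp only; rw [dif_pos h]; positivity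
  have r_zero : ∀ y, y ∉ X → r y = 0 := by
    intro y hy
    have h : ¬ ∃ n, y ∈ C n := by
      rintro ⟨n, hn⟩; exact hy (hCX ▸ Set.mem_iUnion.mpr ⟨n, hn⟩)
    rw [hr]; dsimp only; rw [dif_neg h]
  have r_small : ∀ (x : M), x ∉ X → ∀ ε > (0:ℝ), ∃ δ > (0:ℝ),
      ∀ y, dist x y < δ → r y < ε := by
    intro x hx ε hε
    obtain ⟨n, hn⟩ : ∃ n : ℕ, (2⁻¹ : ℝ) ^ n < ε :=
      exists_pow_lt_of_lt_one hε (by norm_num)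
    have hK : IsClosed (⋃ k ∈ Set.Iic n, C k) :=
      (Set.finite_Iic n).isClosed_biUnion fun k _ => hCc k
    have hxK : x ∉ ⋃ k ∈ Set.Iic n, C k := by
      intro hmem
      obtain ⟨k, _, hk⟩ := Set.mem_iUnion₂.mp hmem
      exact hx (hCX ▸ Set.mem_iUnion.mpr ⟨k, hk⟩)
    obtain ⟨δ, hδ, hball⟩ := Metric.isOpen_iff.mp hK.isOpen_compl x hxK
    refine ⟨δ, hδ, fun y hy => ?_⟩
    have hyK : y ∉ ⋃ k ∈ Set.Iic n, C k :=
      hball (Metric.mem_ball.mpr (by rw [dist_comm]; exact hy))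
    by_cases hyX : ∃ m, y ∈ C m
    · rw [hr]; dsimp only; rw [dif_pos hyX]
      have hlt : n < Nat.find hyX := by
        by_contra hle
        push_neg at hle
        exact hyK (Set.mem_iUnion₂.mpr ⟨_, hle, Nat.find_spec hyX⟩)
      calc (2⁻¹ : ℝ) ^ (Nat.find hyX) ≤ (2⁻¹ : ℝ) ^ n := by
            apply pow_le_pow_of_le_one (by norm_num) (by norm_num) hlt.le
        _ < ε := hn
    · rw [hr]; dsimp only; rw [dif_neg hyX]; exact hε
  -- the new distance
  set e : M → M → ℝ := fun x y =>
    if x = y then 0 else max (dist x y) (max (r x) (r y)) with he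
  have e_self : ∀ x, e x x = 0 := fun x => if_pos rfl
  have e_dist : ∀ x y, dist x y ≤ e x y := by
    intro x y
    rcases eq_or_ne x y with rfl | h
    · rw [e_self x, dist_self]
    · rw [he]; dsimp only; rw [if_neg h]; exact le_max_left _ _
  have e_nonneg : ∀ x y, 0 ≤ e x y := fun x y => dist_nonneg.trans (e_dist x y)
  have e_rleft : ∀ x y, x ≠ y → r x ≤ e x y := by
    intro x y h; rw [he]; dsimp only; rw [if_neg h]
    exact le_max_of_le_right (le_max_left _ _)
  have e_rright : ∀ x y, x ≠ y → r y ≤ e x y := by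
    intro x y h; rw [he]; dsimp only; rw [if_neg h]
    exact le_max_of_le_right (le_max_right _ _)
  have e_comm : ∀ x y, e x y = e y x := by
    intro x y
    rcases eq_or_ne x y with rfl | h
    · rfl
    · rw [he]; dsimp only; rw [if_neg h, if_neg h.symm, dist_comm, max_comm (r x)]
  have e_triangle : ∀ x y z, e x z ≤ e x y + e y z := by
    intro x y z
    rcases eq_or_ne x z with rfl | hxz
    · rw [e_self]; exact add_nonneg (e_nonneg _ _) (e_nonneg _ _)
    rcases eq_or_ne x y with rfl | hxy
    · rw [e_self, zero_add]
    rcases eq_or_ne y z with rfl | hyz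
    · rw [e_self, add_zero]
    have h1 : dist x z ≤ e x y + e y z :=
      (dist_triangle x y z).trans (add_le_add (e_dist x y) (e_dist y z))
    have h2 : r x ≤ e x y + e y z :=
      (e_rleft x y hxy).trans (le_add_of_nonneg_right (e_nonneg y z))
    have h3 : r z ≤ e x y + e y z :=
      (e_rright y z hyz).trans (le_add_of_nonneg_left (e_nonneg x y))
    rw [he]; dsimp only; rw [if_neg hxz]
    exact max_le h1 (max_le h2 h3)
  have e_eq : ∀ x y, e x y = 0 → x = y := by
    intro x y h
    by_contra hne
    have : (0:ℝ) < dist x y := dist_pos.mpr hne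
    exact absurd (h ▸ e_dist x y) (by linarith)
  -- the topology of `e` is the Michael topology
  have H : ∀ s : Set M, IsOpen[michael t X] s ↔
      ∀ x ∈ s, ∃ ε > (0:ℝ), ∀ y, e x y < ε → y ∈ s := by
    intro s
    constructor
    · intro hs
      have hs' : TopologicalSpace.GenerateOpen
          ({U | IsOpen[t] U} ∪ {S | ∃ x ∈ X, S = {x}}) s := hs
      clear hs
      induction hs' with
      | basic u hu =>
        rcases hu with hu | ⟨x0, hx0, rfl⟩
        · intro x hx
          have hu' : IsOpen u := hu
          obtain ⟨δ, hδ, hb⟩ := Metric.isOpen_iff.mp hu' x hx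
          refine ⟨δ, hδ, fun y hy => ?_⟩
          rcases eq_or_ne x y with rfl | hxy
          · exact hx
          · exact hb (Metric.mem_ball.mpr
              (by rw [dist_comm]; exact lt_of_le_of_lt (e_dist x y) hy))
        · intro x hx
          rw [Set.mem_singleton_iff] at hx
          subst hx
          refine ⟨r x, r_pos x hx0, fun y hy => ?_⟩
          rcases eq_or_ne x y with rfl | hxy
          · rfl
          · exact absurd hy (not_lt.mpr (e_rleft x y hxy))
      | univ => exact fun x _ => ⟨1, one_pos, fun y _ => trivial⟩
      | inter u v _ _ ihu ihv =>
        intro x hx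
        obtain ⟨εu, hεu, hu'⟩ := ihu x hx.1
        obtain ⟨εv, hεv, hv'⟩ := ihv x hx.2
        exact ⟨min εu εv, lt_min hεu hεv, fun y hy =>
          ⟨hu' y (hy.trans_le (min_le_left _ _)), hv' y (hy.trans_le (min_le_right _ _))⟩⟩
      | sUnion S _ hS =>
        intro x hx
        obtain ⟨u, huS, hxu⟩ := hx
        obtain ⟨ε, hε, h⟩ := hS u huS x hxu
        exact ⟨ε, hε, fun y hy => ⟨u, huS, h y hy⟩⟩
    · intro hs
      have key : ∀ x ∈ s, ∃ W : Set M, IsOpen[michael t X] W ∧ x ∈ W ∧ W ⊆ s := by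
        intro x hx
        obtain ⟨ε, hε, hb⟩ := hs x hx
        by_cases hxX : x ∈ X
        · refine ⟨{x}, TopologicalSpace.GenerateOpen.basic _ (Or.inr ⟨x, hxX, rfl⟩),
            rfl, ?_⟩
          rintro y rfl
          exact hx
        · obtain ⟨δ, hδ, hδr⟩ := r_small x hxX ε hε
          have hball : Metric.ball x (min δ ε) ∈
              ({U | IsOpen[t] U} ∪ {S | ∃ x ∈ X, S = {x}}) :=
            Or.inl (show IsOpen[t] (Metric.ball x (min δ ε)) from Metric.isOpen_ball)
          refine ⟨Metric.ball x (min δ ε),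
            TopologicalSpace.GenerateOpen.basic _ hball,
            Metric.mem_ball_self (lt_min hδ hε), fun y hy => ?_⟩
          rcases eq_or_ne x y with rfl | hxy
          · exact hx
          · apply hb y
            have hd : dist x y < min δ ε := by
              rw [dist_comm]; exact Metric.mem_ball.mp hy
            have hry : r y < ε := hδr y (hd.trans_le (min_le_left _ _))
            have hrx : r x = 0 := r_zero x hxX
            rw [he]; dsimp only; rw [if_neg hxy]
            exact max_lt (hd.trans_le (min_le_right _ _)) (max_lt (hrx ▸ hε) hry)
      have hs_eq : s = ⋃₀ {W : Set M | IsOpen[michael t X] W ∧ W ⊆ s} := by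
        apply Set.Subset.antisymm
        · intro x hx
          obtain ⟨W, h1, h2, h3⟩ := key x hx
          exact ⟨W, ⟨h1, h3⟩, h2⟩
        · rintro x ⟨W, ⟨_, h3⟩, hxW⟩
          exact h3 hxW
      rw [hs_eq]
      exact TopologicalSpace.GenerateOpen.sUnion _ fun W hW => hW.1
  exact buildMetrizableAux (michael t X) e e_self e_comm e_triangle H e_eq
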